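/- Fix r > 0 and suppose c > 0 satisfies tanh(1/(2rc)) = 2rc; write x = 2rc (so 0 < x < 1). Then g_r(c) = r(1−x²)/x², where g_r(c) := σ(1/(rc))σ(−1/(rc))/(rc²) and σ(x) = 1/(1+e^{−x}). Consequently, g_r(c) > 1 if and only if r > x²/(1−x²). -/

import Mathlib

/-- The logistic function `σ(x) = 1/(1+e^{-x})`. -/
noncomputable def logistic (x : ℝ) : ℝ := 1 / (1 + Real.exp (-x))

/-- Fix `r > 0` and suppose `c > 0` satisfies `tanh(1/(2rc)) = 2rc`; write `x = 2rc`
(so `0 < x < 1`). Then `g_r(c) = r(1-x²)/x²` where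
`g_r(c) = σ(1/(rc)) σ(-1/(rc)) / (rc²)`; consequently `g_r(c) > 1` iff
`r > x²/(1-x²)`. -/
theorem qER_transition_value_at_critical (r c : ℝ) (hr : 0 < r) (hc : 0 < c)
    (h : Real.tanh (1 / (2 * r * c)) = 2 * r * c) :
    (0 < 2 * r * c ∧ 2 * r * c < 1) ∧
    logistic (1 / (r * c)) * logistic (-(1 / (r * c))) / (r * c ^ 2)
      = r * (1 - (2 * r * c) ^ 2) / (2 * r * c) ^ 2 ∧
    (1 < logistic (1 / (r * c)) * logistic (-(1 / (r * c))) / (r * c ^ 2) ↔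
      (2 * r * c) ^ 2 / (1 - (2 * r * c) ^ 2) < r) := by
  set x : ℝ := 2 * r * c with hxdef
  have hx0 : 0 < x := by positivity
  set t : ℝ := 1 / (2 * r * c) with htdef
  have ht0 : 0 < t := by positivity
  set E : ℝ := Real.exp (1 / (r * c)) with hEdef
  have hE0 : 0 < E := Real.exp_pos _
  have hE2 : E = Real.exp t * Real.exp t := by
    rw [← Real.exp_add, hEdef]
    congr 1
    rw [htdef]
    field_simp
    ring
  have hcosh : 0 < Real.exp t + Real.exp (-t) := by positivity
  have hE' : Real.exp t - Real.exp (-t) = x * (Real.exp t + Real.exp (-t)) := by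
    have := h
    rw [Real.tanh_eq_sinh_div_cosh, Real.sinh_eq, Real.cosh_eq] at this
    field_simp at this
    linarith [this]
  have hkey : E * (1 - x) = 1 + x := by
    have hne : Real.exp t ≠ 0 := (Real.exp_pos t).ne'
    have h1 : Real.exp t * Real.exp (-t) = 1 := by
      rw [← Real.exp_add]; simp
    rw [hE2]
    linear_combination Real.exp t * hE' + (1 + x) * h1
  have hx1 : x < 1 := by nlinarith [hE0, hkey]
  have hxne : (1 : ℝ) - x > 0 := by linarith
  have hEeq : E = (1 + x) / (1 - x) := by
    field_simp
    linarith [hkey]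
  have hexpneg : Real.exp (-(1 / (r * c))) = 1 / E := by
    rw [hEdef, Real.exp_neg]; exact (one_div _).symm
  have hprod : logistic (1 / (r * c)) * logistic (-(1 / (r * c))) = (1 - x ^ 2) / 4 := by
    unfold logistic
    rw [neg_neg, hexpneg, ← hEdef, hEeq]
    have h1x : (1 : ℝ) + x > 0 := by linarith
    field_simp
    ring
  have hrc2 : r * c ^ 2 = x ^ 2 / (4 * r) := by
    rw [hxdef]; field_simp; ring
  have hmain : logistic (1 / (r * c)) * logistic (-(1 / (r * c))) / (r * c ^ 2)
      = r * (1 - x ^ 2) / x ^ 2 := by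
    rw [hprod, hrc2]
    field_simp
  refine ⟨⟨hx0, hx1⟩, hmain, ?_⟩
  rw [hmain]
  have hx2 : 0 < x ^ 2 := by positivity
  have h1x2 : 0 < 1 - x ^ 2 := by nlinarith
  rw [div_lt_iff₀ h1x2, lt_div_iff₀ hx2]
  constructor <;> intro hh <;> nlinarith
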